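/- arXiv:2303.08502 — 3 statements merged into one kernel-verified Lean document; each statement's English description precedes it below -/
import Mathlib

section
/- Let p be a prime and let A be a commutative ring of characteristic p. In the category of commutative rings, PerfectClosure A p together with the canonical maps is the colimit of the ℕ-indexed diagram whose objects are all equal to A and whose transition maps are all the Frobenius endomorphism a ↦ a^p. -/
open CategoryTheory Limits

universe u

noncomputable section

variable (p : ℕ) [Fact p.Prime] (A : Type u) [CommRing A] [CharP A p]

/-- The `ℕ`-indexed diagram `A ⟶ A ⟶ A ⟶ ⋯` in the category of commutative rings, whose
objects are all equal to `A` and whose transition maps are all the Frobenius `a ↦ a ^ p`. -/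
def frobeniusDiagram : ℕ ⥤ CommRingCat.{u} :=
  Functor.ofSequence (X := fun _ => CommRingCat.of A)
    (fun _ => CommRingCat.ofHom (frobenius A p))

/-- The canonical map `A → PerfectClosure A p` at level `n`, sending `a` to the class of
`(n, a)` (formally: `frobenius⁻ⁿ ∘ of`). -/
def perfectClosureLeg (n : ℕ) : CommRingCat.of A ⟶ CommRingCat.of (PerfectClosure A p) :=
  CommRingCat.ofHom <|
    (((frobeniusEquiv (PerfectClosure A p) p).symm ^ n :
        RingAut (PerfectClosure A p)) : PerfectClosure A p →+* PerfectClosure A p).comp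
      (PerfectClosure.of A p)

/-- The canonical maps indeed send `a` to the class of `(n, a)` in the perfect closure. -/
lemma perfectClosureLeg_apply (n : ℕ) (a : A) :
    perfectClosureLeg p A n a = PerfectClosure.mk A p (n, a) := by
  induction n with
  | zero =>
    simp only [perfectClosureLeg, CommRingCat.ofHom, pow_zero, RingHom.comp_apply,
      PerfectClosure.of_apply]
    rfl
  | succ n ih =>
    have h : perfectClosureLeg p A (n + 1) a =
        (frobeniusEquiv (PerfectClosure A p) p).symm (perfectClosureLeg p A n a) := by
      simp only [perfectClosureLeg, CommRingCat.ofHom, RingHom.comp_apply]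
      rw [pow_succ']
      rfl
    have hfr : frobenius (PerfectClosure A p) p (PerfectClosure.mk A p (n + 1, a)) =
        PerfectClosure.mk A p (n, a) := by
      rw [PerfectClosure.frobenius_mk]
      exact PerfectClosure.mk_succ_pow A p n a
    rw [h, ih, ← hfr, frobeniusEquiv_symm_apply_frobenius]

/-- The cocone over the Frobenius diagram with point `PerfectClosure A p` and legs the
canonical maps. -/
def perfectClosureCocone : Cocone (frobeniusDiagram p A) where
  pt := CommRingCat.of (PerfectClosure A p)
  ι := NatTrans.ofSequence (F := frobeniusDiagram p A)
    (G := (Functor.const ℕ).obj (CommRingCat.of (PerfectClosure A p)))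
    (fun n => perfectClosureLeg p A n)
    (fun n => by
      ext a
      have h1 : (frobeniusDiagram p A).map (homOfLE (n.le_add_right 1)) =
          CommRingCat.ofHom (frobenius A p) :=
        Functor.ofSequence_map_homOfLE_succ _ n
      simp only [h1, Functor.const_obj_obj, Functor.const_obj_map, Category.comp_id]
      show perfectClosureLeg p A (n + 1) (frobenius A p a) = perfectClosureLeg p A n a
      rw [perfectClosureLeg_apply]
      exact (PerfectClosure.mk_succ_pow A p n a).trans (perfectClosureLeg_apply p A n a).symm)

lemma cocone_step (s : Cocone (frobeniusDiagram p A)) (n : ℕ) (a : A) :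
    s.ι.app (n + 1) (frobenius A p a) = s.ι.app n a := by
  have h := s.w (homOfLE (n.le_add_right 1))
  have h1 : (frobeniusDiagram p A).map (homOfLE (n.le_add_right 1)) =
      CommRingCat.ofHom (frobenius A p) :=
    Functor.ofSequence_map_homOfLE_succ _ n
  rw [h1] at h
  exact congrArg (fun f : CommRingCat.of A ⟶ s.pt => f a) h

lemma cocone_iter (s : Cocone (frobeniusDiagram p A)) (m n : ℕ) (a : A) :
    s.ι.app (m + n) ((frobenius A p)^[n] a) = s.ι.app m a := by
  induction n with
  | zero => rfl
  | succ n ih =>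
    rw [Function.iterate_succ_apply', ← Nat.add_assoc, cocone_step, ih]

/-- The descending ring hom from the perfect closure to the point of a cocone. -/
def descFun (s : Cocone (frobeniusDiagram p A)) : PerfectClosure A p → s.pt := fun x =>
  PerfectClosure.liftOn x (fun y => s.ι.app y.1 y.2) (by
    rintro _ _ ⟨n, a⟩
    exact (cocone_step p A s n a).symm)

lemma descFun_mk (s : Cocone (frobeniusDiagram p A)) (x : ℕ × A) :
    descFun p A s (PerfectClosure.mk A p x) = s.ι.app x.1 x.2 :=
  PerfectClosure.liftOn_mk _ _ _

/-- The descending ring hom from the perfect closure to the point of a cocone. -/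
def descHom (s : Cocone (frobeniusDiagram p A)) : PerfectClosure A p →+* s.pt where
  toFun := descFun p A s
  map_one' := by
    rw [PerfectClosure.one_def, descFun_mk]
    exact map_one _
  map_mul' x y := by
    obtain ⟨⟨m, a⟩, rfl⟩ := PerfectClosure.mk_surjective A p x
    obtain ⟨⟨n, b⟩, rfl⟩ := PerfectClosure.mk_surjective A p y
    show descFun p A s (PerfectClosure.mk A p (m, a) * PerfectClosure.mk A p (n, b)) =
      descFun p A s (PerfectClosure.mk A p (m, a)) * descFun p A s (PerfectClosure.mk A p (n, b))
    rw [PerfectClosure.mk_mul_mk, descFun_mk, descFun_mk, descFun_mk]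
    simp only [map_mul]
    have e1 := cocone_iter p A s m n a
    have e2 := cocone_iter p A s n m b
    rw [Nat.add_comm n m] at e2
    exact (map_mul (s.ι.app (m + n)).hom _ _).trans (congrArg₂ (· * ·) e1 e2)
  map_zero' := by
    show descFun p A s 0 = 0
    rw [PerfectClosure.zero_def, descFun_mk]
    exact map_zero _
  map_add' x y := by
    obtain ⟨⟨m, a⟩, rfl⟩ := PerfectClosure.mk_surjective A p x
    obtain ⟨⟨n, b⟩, rfl⟩ := PerfectClosure.mk_surjective A p y
    show descFun p A s (PerfectClosure.mk A p (m, a) + PerfectClosure.mk A p (n, b)) =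
      descFun p A s (PerfectClosure.mk A p (m, a)) + descFun p A s (PerfectClosure.mk A p (n, b))
    rw [PerfectClosure.mk_add_mk, descFun_mk, descFun_mk, descFun_mk]
    simp only [map_add]
    have e1 := cocone_iter p A s m n a
    have e2 := cocone_iter p A s n m b
    rw [Nat.add_comm n m] at e2
    exact (map_add (s.ι.app (m + n)).hom _ _).trans (congrArg₂ (· + ·) e1 e2)

lemma descHom_mk (s : Cocone (frobeniusDiagram p A)) (n : ℕ) (a : A) :
    descHom p A s (PerfectClosure.mk A p (n, a)) = s.ι.app n a :=
  descFun_mk p A s (n, a)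

/-- In the category of commutative rings, `PerfectClosure A p` together with
the canonical maps is the colimit of the `ℕ`-indexed diagram whose objects are all equal to `A`
and whose transition maps are all the Frobenius endomorphism `a ↦ a ^ p`. -/
theorem perfectClosure_isColimit : Nonempty (IsColimit (perfectClosureCocone p A)) := by
  refine ⟨{ desc := fun s => CommRingCat.ofHom (descHom p A s), fac := ?_, uniq := ?_ }⟩
  · intro s n
    ext a
    show descHom p A s (perfectClosureLeg p A n a) = s.ι.app n a
    exact (congrArg (descHom p A s) (perfectClosureLeg_apply p A n a)).trans (descHom_mk p A s n a)
  · intro s m hm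
    ext x
    obtain ⟨⟨n, a⟩, rfl⟩ := PerfectClosure.mk_surjective A p x
    show m (PerfectClosure.mk A p (n, a)) = descHom p A s (PerfectClosure.mk A p (n, a))
    rw [descHom_mk, ← hm n]
    show m (PerfectClosure.mk A p (n, a)) = m (perfectClosureLeg p A n a)
    rw [perfectClosureLeg_apply]

end
end

section
/- Let p be a prime, let A be a commutative ring of characteristic p, and let B and C be commutative A-algebras. Equip PerfectClosure B p and PerfectClosure C p with their PerfectClosure A p-algebra structures induced by functoriality of the perfection (i.e. via the unique ring homomorphisms PerfectClosure A p → PerfectClosure B p and PerfectClosure A p → PerfectClosure C p compatible with the canonical maps and the structure maps A → B, A → C). Then there is a ring isomorphism PerfectClosure (B ⊗[A] C) p ≅ (PerfectClosure B p) ⊗[PerfectClosure A p] (PerfectClosure C p), compatible with the canonical maps from B ⊗[A] C. -/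
open scoped TensorProduct

universe u

noncomputable section

/-- The ring homomorphism `PerfectClosure A p →+* PerfectClosure B p` induced by functoriality
of the direct perfection from a ring homomorphism `f : A →+* B`: it is the unique ring
homomorphism compatible with the canonical maps, i.e. satisfying
`(pcMap p f) ∘ of_A = of_B ∘ f`. -/
def pcMap (p : ℕ) [Fact p.Prime] {A : Type u} {B : Type u} [CommRing A] [CommRing B]
    [CharP A p] [CharP B p] (f : A →+* B) :
    PerfectClosure A p →+* PerfectClosure B p :=
  PerfectClosure.lift A p (PerfectClosure B p) ((PerfectClosure.of B p).comp f)

variable (p : ℕ) [Fact p.Prime] (A B C : Type u) [CommRing A] [CommRing B] [CommRing C]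
  [CharP A p] [CharP B p] [CharP C p] [Algebra A B] [Algebra A C]

/-- The `PerfectClosure A p`-algebra structure on `PerfectClosure B p` induced by
functoriality of the perfection from the structure map `A → B`. -/
instance pcAlgebraB : Algebra (PerfectClosure A p) (PerfectClosure B p) :=
  (pcMap p (algebraMap A B)).toAlgebra

/-- The `PerfectClosure A p`-algebra structure on `PerfectClosure C p` induced by
functoriality of the perfection from the structure map `A → C`. -/
instance pcAlgebraC : Algebra (PerfectClosure A p) (PerfectClosure C p) :=
  (pcMap p (algebraMap A C)).toAlgebra

section Aux

variable (p : ℕ) [Fact p.Prime]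

theorem pc_hom_ext {K L : Type*} [CommRing K] [CharP K p] [CommSemiring L] [CharP L p]
    [PerfectRing L p] {g₁ g₂ : PerfectClosure K p →+* L}
    (h : g₁.comp (PerfectClosure.of K p) = g₂.comp (PerfectClosure.of K p)) : g₁ = g₂ :=
  (PerfectClosure.lift K p L).symm.injective h

theorem pc_lift_comp_of {K L : Type*} [CommRing K] [CharP K p] [CommSemiring L] [CharP L p]
    [PerfectRing L p] (f : K →+* L) :
    (PerfectClosure.lift K p L f).comp (PerfectClosure.of K p) = f :=
  (PerfectClosure.lift K p L).symm_apply_apply f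

theorem pc_lift_of {K L : Type*} [CommRing K] [CharP K p] [CommSemiring L] [CharP L p]
    [PerfectRing L p] (f : K →+* L) (x : K) :
    PerfectClosure.lift K p L f (PerfectClosure.of K p x) = f x :=
  RingHom.congr_fun (pc_lift_comp_of p f) x

theorem frobEquiv_symm_map {R S : Type*} [CommSemiring R] [CommSemiring S]
    [ExpChar R p] [ExpChar S p] [PerfectRing R p] [PerfectRing S p]
    (f : R →+* S) (x : R) :
    (frobeniusEquiv S p).symm (f x) = f ((frobeniusEquiv R p).symm x) := by
  apply (injective_frobenius S p)
  rw [frobenius_apply_frobeniusEquiv_symm, ← RingHom.map_frobenius,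
    frobenius_apply_frobeniusEquiv_symm]

end Aux

section PCMapLemmas

variable (p : ℕ) [Fact p.Prime]

theorem pcMap_comp_of {A B : Type u} [CommRing A] [CommRing B] [CharP A p] [CharP B p]
    (f : A →+* B) :
    (pcMap p f).comp (PerfectClosure.of A p) = (PerfectClosure.of B p).comp f :=
  pc_lift_comp_of p _

theorem pcMap_of {A B : Type u} [CommRing A] [CommRing B] [CharP A p] [CharP B p]
    (f : A →+* B) (x : A) :
    pcMap p f (PerfectClosure.of A p x) = PerfectClosure.of B p (f x) :=
  RingHom.congr_fun (pcMap_comp_of p f) x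

theorem pcMap_comp {A B C : Type u} [CommRing A] [CommRing B] [CommRing C]
    [CharP A p] [CharP B p] [CharP C p] (g : B →+* C) (f : A →+* B) :
    pcMap p (g.comp f) = (pcMap p g).comp (pcMap p f) := by
  apply pc_hom_ext p
  ext x
  simp [pcMap_of]

end PCMapLemmas

section Instances

variable (p : ℕ) [Fact p.Prime] (A B C : Type u) [CommRing A] [CommRing B] [CommRing C]
  [CharP A p] [CharP B p] [CharP C p] [Algebra A B] [Algebra A C]

local notation "PA" => PerfectClosure A p
local notation "PB" => PerfectClosure B p
local notation "PC" => PerfectClosure C p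
local notation "S" => PerfectClosure B p ⊗[PerfectClosure A p] PerfectClosure C p

/-- The statement's scalar action unfolded. -/
theorem pc_smul_def (a : PerfectClosure A p) (x : PerfectClosure B p) :
    a • x = pcMap p (algebraMap A B) a * x := rfl

variable [CharP (B ⊗[A] C) p]

/-- Left inclusion into the perfection of the tensor product, as an algebra hom. -/
noncomputable def pcIncLeft : PerfectClosure B p →ₐ[PerfectClosure A p]
    PerfectClosure (B ⊗[A] C) p :=
  { toRingHom := pcMap p (Algebra.TensorProduct.includeLeftRingHom (R := A) (A := B) (B := C))
    commutes' := fun a => by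
      show (pcMap p _).comp (pcMap p (algebraMap A B)) a = pcMap p (algebraMap A (B ⊗[A] C)) a
      rw [← pcMap_comp]
      congr 1 }

/-- Right inclusion into the perfection of the tensor product, as an algebra hom. -/
noncomputable def pcIncRight : PerfectClosure C p →ₐ[PerfectClosure A p]
    PerfectClosure (B ⊗[A] C) p :=
  { toRingHom := pcMap p ((Algebra.TensorProduct.includeRight (R := A) (A := B) (B := C)) :
      C →ₐ[A] B ⊗[A] C).toRingHom
    commutes' := fun a => by
      have h : ((Algebra.TensorProduct.includeRight (R := A) (A := B) (B := C)) :
          C →ₐ[A] B ⊗[A] C).toRingHom.comp (algebraMap A C) = algebraMap A (B ⊗[A] C) :=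
        RingHom.ext fun x =>
          (Algebra.TensorProduct.includeRight (R := A) (A := B) (B := C)).commutes x
      show (pcMap p _).comp (pcMap p (algebraMap A C)) a = pcMap p (algebraMap A (B ⊗[A] C)) a
      rw [← pcMap_comp, h] }

theorem S_nontrivial : Nontrivial (PerfectClosure B p ⊗[PerfectClosure A p] PerfectClosure C p) := by
  classical
  letI ε := Algebra.TensorProduct.productMap (pcIncLeft p A B C) (pcIncRight p A B C)
  haveI : Nontrivial (PerfectClosure (B ⊗[A] C) p) :=
    CharP.nontrivial_of_char_ne_one (Fact.out : p.Prime).ne_one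
  refine nontrivial_of_ne 1 0 fun h => ?_
  have h2 : (1 : PerfectClosure (B ⊗[A] C) p) = 0 := by
    rw [← map_one ε, h, map_zero]
  exact one_ne_zero h2

instance S_charP : CharP (PerfectClosure B p ⊗[PerfectClosure A p] PerfectClosure C p) p := by
  haveI := S_nontrivial p A B C
  refine (CharP.charP_iff_prime_eq_zero Fact.out).2 ?_
  have h : ((p : ℕ) : S) = algebraMap PA S ((p : ℕ) : PA) := (map_natCast _ p).symm
  rw [h, CharP.cast_eq_zero, map_zero]

noncomputable def S_pthRootAux :
    (PerfectClosure B p ⊗[PerfectClosure A p] PerfectClosure C p) →+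
      (PerfectClosure B p ⊗[PerfectClosure A p] PerfectClosure C p) :=
  TensorProduct.liftAddHom
    { toFun := fun x =>
        { toFun := fun y => ((frobeniusEquiv PB p).symm x) ⊗ₜ[PA] ((frobeniusEquiv PC p).symm y)
          map_zero' := by simp
          map_add' := fun y z => by simp [TensorProduct.tmul_add] }
      map_zero' := by ext y; simp
      map_add' := fun x z => by ext y; simp [TensorProduct.add_tmul] }
    (fun r x y => by
      simp only [AddMonoidHom.coe_mk, ZeroHom.coe_mk]
      rw [Algebra.smul_def, Algebra.smul_def, map_mul, map_mul]
      show ((frobeniusEquiv PB p).symm ((algebraMap PA PB) r) * _) ⊗ₜ[PA] _ = _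
      rw [frobEquiv_symm_map p (algebraMap PA PB), frobEquiv_symm_map p (algebraMap PA PC)]
      rw [← Algebra.smul_def, ← Algebra.smul_def, TensorProduct.smul_tmul])

theorem S_pthRootAux_tmul (x : PerfectClosure B p) (y : PerfectClosure C p) :
    S_pthRootAux p A B C (x ⊗ₜ[PerfectClosure A p] y) =
      ((frobeniusEquiv (PerfectClosure B p) p).symm x) ⊗ₜ[PerfectClosure A p]
        ((frobeniusEquiv (PerfectClosure C p) p).symm y) := rfl

instance S_perfect :
    PerfectRing (PerfectClosure B p ⊗[PerfectClosure A p] PerfectClosure C p) p := by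
  constructor
  have hright : ∀ s : S, frobenius S p (S_pthRootAux p A B C s) = s := by
    intro s
    induction s using TensorProduct.induction_on with
    | zero => simp
    | tmul x y =>
        rw [S_pthRootAux_tmul, frobenius_def, Algebra.TensorProduct.tmul_pow,
          frobeniusEquiv_symm_pow_p, frobeniusEquiv_symm_pow_p]
    | add x y hx hy => rw [map_add, map_add, hx, hy]
  have hleft : ∀ s : S, S_pthRootAux p A B C (frobenius S p s) = s := by
    intro s
    induction s using TensorProduct.induction_on with
    | zero => simp
    | tmul x y =>
        rw [frobenius_def, Algebra.TensorProduct.tmul_pow, ← frobenius_def, ← frobenius_def,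
          S_pthRootAux_tmul, frobeniusEquiv_symm_apply_frobenius,
          frobeniusEquiv_symm_apply_frobenius]
    | add x y hx hy => rw [map_add, map_add, hx, hy]
  exact ⟨Function.LeftInverse.injective hleft, Function.RightInverse.surjective hright⟩

end Instances

/-- Let `p` be a prime, `A` a commutative ring of characteristic `p`, and `B`,
`C` commutative `A`-algebras (of characteristic `p`).  Then there is a ring isomorphism
`PerfectClosure (B ⊗[A] C) p ≃+* PerfectClosure B p ⊗[PerfectClosure A p] PerfectClosure C p`
compatible with the canonical maps from `B ⊗[A] C`, i.e. sending the class of `b ⊗ c` to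
`(of b) ⊗ (of c)`. -/
theorem perfectClosure_tensorProduct [CharP (B ⊗[A] C) p] :
    ∃ e : PerfectClosure (B ⊗[A] C) p ≃+*
        (PerfectClosure B p ⊗[PerfectClosure A p] PerfectClosure C p),
      ∀ (b : B) (c : C),
        e (PerfectClosure.of (B ⊗[A] C) p (b ⊗ₜ[A] c)) =
          PerfectClosure.of B p b ⊗ₜ[PerfectClosure A p] PerfectClosure.of C p c := by
  classical
  letI : Algebra A (PerfectClosure B p ⊗[PerfectClosure A p] PerfectClosure C p) :=
    ((algebraMap (PerfectClosure A p)
        (PerfectClosure B p ⊗[PerfectClosure A p] PerfectClosure C p)).comp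
      (PerfectClosure.of A p)).toAlgebra
  have halg : ∀ a : A,
      algebraMap A (PerfectClosure B p ⊗[PerfectClosure A p] PerfectClosure C p) a =
        algebraMap (PerfectClosure A p) _ (PerfectClosure.of A p a) := fun _ => rfl
  letI φB : B →ₐ[A] PerfectClosure B p ⊗[PerfectClosure A p] PerfectClosure C p :=
    { toRingHom :=
        (Algebra.TensorProduct.includeLeftRingHom (R := PerfectClosure A p)
            (A := PerfectClosure B p) (B := PerfectClosure C p)).comp (PerfectClosure.of B p)
      commutes' := fun a => by
        show PerfectClosure.of B p (algebraMap A B a) ⊗ₜ[PerfectClosure A p] 1 = _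
        rw [halg, Algebra.TensorProduct.algebraMap_apply]
        show _ = (pcMap p (algebraMap A B) (PerfectClosure.of A p a)) ⊗ₜ[PerfectClosure A p] 1
        rw [pcMap_of] }
  letI φC : C →ₐ[A] PerfectClosure B p ⊗[PerfectClosure A p] PerfectClosure C p :=
    { toRingHom :=
        ((Algebra.TensorProduct.includeRight (R := PerfectClosure A p)
            (A := PerfectClosure B p) (B := PerfectClosure C p)) :
          PerfectClosure C p →ₐ[PerfectClosure A p] _).toRingHom.comp (PerfectClosure.of C p)
      commutes' := fun a => by
        show Algebra.TensorProduct.includeRight (PerfectClosure.of C p (algebraMap A C a)) = _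
        rw [halg, ← pcMap_of p (algebraMap A C) a]
        exact Algebra.TensorProduct.includeRight.commutes _ }
  letI Φ := Algebra.TensorProduct.productMap φB φC
  letI fwd := PerfectClosure.lift (B ⊗[A] C) p
    (PerfectClosure B p ⊗[PerfectClosure A p] PerfectClosure C p) Φ.toRingHom
  letI bwd := (Algebra.TensorProduct.productMap (pcIncLeft p A B C) (pcIncRight p A B C)).toRingHom
  have hΦ : ∀ (b : B) (c : C), Φ (b ⊗ₜ[A] c) =
      PerfectClosure.of B p b ⊗ₜ[PerfectClosure A p] PerfectClosure.of C p c := by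
    intro b c
    rw [Algebra.TensorProduct.productMap_apply_tmul]
    show (PerfectClosure.of B p b ⊗ₜ[PerfectClosure A p] 1) *
        (1 ⊗ₜ[PerfectClosure A p] PerfectClosure.of C p c) = _
    rw [Algebra.TensorProduct.tmul_mul_tmul, mul_one, one_mul]
  have hfwd : ∀ x : B ⊗[A] C,
      fwd (PerfectClosure.of (B ⊗[A] C) p x) = Φ x := fun x => pc_lift_of p _ x
  have hbwdΦ : ∀ x : B ⊗[A] C, bwd (Φ x) = PerfectClosure.of (B ⊗[A] C) p x := by
    intro x
    induction x using TensorProduct.induction_on with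
    | zero => simp
    | tmul b c =>
        rw [hΦ]
        show pcMap p _ (PerfectClosure.of B p b) * pcMap p _ (PerfectClosure.of C p c) = _
        rw [pcMap_of, pcMap_of, ← map_mul]
        congr 1
        show (b ⊗ₜ[A] 1) * (1 ⊗ₜ[A] c) = b ⊗ₜ[A] c
        rw [Algebra.TensorProduct.tmul_mul_tmul, mul_one, one_mul]
    | add x y hx hy => rw [map_add, map_add, hx, hy, map_add]
  have key_left : ∀ x : PerfectClosure B p,
      fwd ((pcIncLeft p A B C) x) = x ⊗ₜ[PerfectClosure A p] 1 := by
    intro x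
    have : fwd.comp (pcIncLeft p A B C).toRingHom =
        Algebra.TensorProduct.includeLeftRingHom := by
      apply pc_hom_ext p
      ext b
      show fwd (pcMap p (Algebra.TensorProduct.includeLeftRingHom (R := A) (A := B) (B := C))
          (PerfectClosure.of B p b)) =
        PerfectClosure.of B p b ⊗ₜ[PerfectClosure A p] (1 : PerfectClosure C p)
      rw [pcMap_of, hfwd]
      show Φ (b ⊗ₜ[A] 1) = PerfectClosure.of B p b ⊗ₜ[PerfectClosure A p] 1
      rw [hΦ, map_one]
    exact RingHom.congr_fun this x
  have key_right : ∀ y : PerfectClosure C p,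
      fwd ((pcIncRight p A B C) y) = 1 ⊗ₜ[PerfectClosure A p] y := by
    intro y
    have : fwd.comp (pcIncRight p A B C).toRingHom =
        (Algebra.TensorProduct.includeRight (R := PerfectClosure A p)
          (A := PerfectClosure B p) (B := PerfectClosure C p)).toRingHom := by
      apply pc_hom_ext p
      ext c
      show fwd (pcMap p ((Algebra.TensorProduct.includeRight (R := A) (A := B) (B := C)) :
          C →ₐ[A] B ⊗[A] C).toRingHom (PerfectClosure.of C p c)) =
        (1 : PerfectClosure B p) ⊗ₜ[PerfectClosure A p] PerfectClosure.of C p c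
      rw [pcMap_of, hfwd]
      show Φ (1 ⊗ₜ[A] c) = (1 : PerfectClosure B p) ⊗ₜ[PerfectClosure A p] PerfectClosure.of C p c
      rw [hΦ, map_one]
    exact RingHom.congr_fun this y
  have h1 : bwd.comp fwd = RingHom.id _ := by
    apply pc_hom_ext p
    refine RingHom.ext fun x => ?_
    show bwd (fwd (PerfectClosure.of (B ⊗[A] C) p x)) = PerfectClosure.of (B ⊗[A] C) p x
    rw [hfwd, hbwdΦ]
  have h2 : fwd.comp bwd = RingHom.id _ := by
    refine RingHom.ext fun s => ?_
    show fwd (bwd s) = s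
    induction s using TensorProduct.induction_on with
    | zero => simp
    | tmul x y =>
        show fwd (Algebra.TensorProduct.productMap (pcIncLeft p A B C) (pcIncRight p A B C)
          (x ⊗ₜ[PerfectClosure A p] y)) = x ⊗ₜ[PerfectClosure A p] y
        rw [Algebra.TensorProduct.productMap_apply_tmul, map_mul, key_left, key_right,
          Algebra.TensorProduct.tmul_mul_tmul, mul_one, one_mul]
    | add x y hx hy => rw [map_add, map_add, hx, hy]
  refine ⟨RingEquiv.ofRingHom fwd bwd h2 h1, fun b c => ?_⟩
  show fwd (PerfectClosure.of (B ⊗[A] C) p (b ⊗ₜ[A] c)) = _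
  rw [hfwd, hΦ]


end
end

section
/- Let p be a prime and let A be a commutative ring of characteristic p. Then the map on prime spectra induced by the canonical ring homomorphism φ_A : A → PerfectClosure A p, namely PrimeSpectrum.comap φ_A : PrimeSpectrum (PerfectClosure A p) → PrimeSpectrum A, is a homeomorphism. In particular, the underlying topological space of the perfection Spec(A^pf) is canonically homeomorphic to that of Spec(A). -/
universe u

/-- Let `p` be a prime and `A` a commutative ring of characteristic `p`.  The
map on prime spectra induced by the canonical ring homomorphism
`φ_A : A → PerfectClosure A p` is a homeomorphism: the underlying topological space of
`Spec (A^pf)` is canonically homeomorphic to that of `Spec A`. -/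
theorem primeSpectrum_comap_perfectClosure_of_homeomorph (p : ℕ) [Fact p.Prime]
    (A : Type u) [CommRing A] [CharP A p] :
    IsHomeomorph (PrimeSpectrum.comap (PerfectClosure.of A p)) := by
  have hp : p.Prime := Fact.out
  set f := PerfectClosure.of A p with hf
  have key : ∀ x : PerfectClosure A p, ∃ (n : ℕ) (a : A), x ^ p ^ n = f a := by
    intro x
    refine PerfectClosure.induction_on x fun ⟨n, a⟩ => ⟨n, a, ?_⟩
    rw [← PerfectClosure.iterate_frobenius_mk A p n a, ← iterate_frobenius]
  have hint : f.IsIntegral := by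
    intro x
    obtain ⟨n, a, hx⟩ := key x
    refine ⟨Polynomial.X ^ p ^ n - Polynomial.C a,
      Polynomial.monic_X_pow_sub_C a (pow_ne_zero n hp.ne_zero), ?_⟩
    simp [hx]
  have hker : ∀ a : A, f a = 0 → IsNilpotent a := by
    intro a ha
    rw [PerfectClosure.of_apply, PerfectClosure.zero_def, PerfectClosure.mk_eq_iff] at ha
    obtain ⟨z, hz⟩ := ha
    refine ⟨p ^ (0 + z), ?_⟩
    rw [← iterate_frobenius, hz, iterate_map_zero]
  have hinj : Function.Injective (PrimeSpectrum.comap f) := by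
    intro x y hxy
    ext z
    obtain ⟨n, a, hz⟩ := key z
    have hx : z ∈ x.asIdeal ↔ a ∈ (PrimeSpectrum.comap f x).asIdeal := by
      constructor
      · intro h
        exact Ideal.mem_comap.mpr (hz ▸ Ideal.pow_mem_of_mem _ h _ (pow_pos hp.pos n))
      · intro h
        exact x.2.mem_of_pow_mem (p ^ n) (hz ▸ Ideal.mem_comap.mp h)
    have hy : z ∈ y.asIdeal ↔ a ∈ (PrimeSpectrum.comap f y).asIdeal := by
      constructor
      · intro h
        exact Ideal.mem_comap.mpr (hz ▸ Ideal.pow_mem_of_mem _ h _ (pow_pos hp.pos n))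
      · intro h
        exact y.2.mem_of_pow_mem (p ^ n) (hz ▸ Ideal.mem_comap.mp h)
    rw [hx, hy, hxy]
  have hsurj : Function.Surjective (PrimeSpectrum.comap f) := by
    intro x
    algebraize [f]
    have hle : (⊥ : Ideal (PerfectClosure A p)).comap (algebraMap A (PerfectClosure A p)) ≤
        x.asIdeal := by
      intro a ha
      simp only [Ideal.mem_comap, Ideal.mem_bot] at ha
      obtain ⟨n, hn⟩ := hker a ha
      exact x.2.mem_of_pow_mem n (hn ▸ Ideal.zero_mem _)
    obtain ⟨Q, -, hQp, hQc⟩ :=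
      Ideal.exists_ideal_over_prime_of_isIntegral (S := PerfectClosure A p) x.asIdeal ⊥ hle
    exact ⟨⟨Q, hQp⟩, PrimeSpectrum.ext hQc⟩
  rw [isHomeomorph_iff_continuous_isClosedMap_bijective]
  exact ⟨PrimeSpectrum.continuous_comap f,
    PrimeSpectrum.isClosedMap_comap_of_isIntegral f hint, hinj, hsurj⟩
end
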